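/- Let (F, v) be a valued field with values in a linearly ordered commutative group with zero Γ₀, and let r ∈ Γ₀. Define w_r : F[X] → Γ₀ by w_r(Σᵢ aᵢ Xⁱ) = max over i of v(aᵢ)·rⁱ (with w_r(0) = 0). Then w_r is a valuation on the polynomial ring F[X]: w_r(0) = 0, w_r(1) = 1, w_r(p·q) = w_r(p)·w_r(q) for all p, q ∈ F[X], and w_r(p + q) ≤ max(w_r(p), w_r(q)). (For λ ∈ F this yields, after the substitution X ↦ X − λ, the valuation Σ aᵢ(u−λ)ⁱ ↦ max v(aᵢ)·rⁱ defining the generic type of the closed ball of center λ and radius r.) -/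

import Mathlib

open Polynomial

/-- In a linearly ordered commutative group with zero, `0` is a bottom element. -/
noncomputable instance {Γ₀ : Type*} [LinearOrderedCommGroupWithZero Γ₀] : OrderBot Γ₀ where
  bot := 0
  bot_le _ := zero_le'

/-- The Gauss norm of parameter `r`: `w_r (Σ aᵢ Xⁱ) = max_i v(aᵢ)·rⁱ`, the max being taken
over the (finite) support, so that `w_r 0 = 0`. -/
noncomputable def gaussVal {F Γ₀ : Type*} [Field F] [LinearOrderedCommGroupWithZero Γ₀]
    (v : Valuation F Γ₀) (r : Γ₀) (p : F[X]) : Γ₀ :=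
  p.support.sup fun i => v (p.coeff i) * r ^ i

section Aux

variable {F Γ₀ : Type*} [Field F] [LinearOrderedCommGroupWithZero Γ₀]
  (v : Valuation F Γ₀) (r : Γ₀)

lemma aux_mul_lt_mul {a b c d : Γ₀} (h1 : a < b) (h2 : c ≤ d) (hd : d ≠ 0) :
    a * c < b * d := by
  exact mul_lt_mul_of_lt_of_le_of_nonneg_of_pos h1 h2 zero_le' (zero_lt_iff.mpr hd)

lemma le_gaussVal (p : F[X]) (n : ℕ) : v (p.coeff n) * r ^ n ≤ gaussVal v r p := by
  by_cases h : n ∈ p.support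
  · exact Finset.le_sup (f := fun i => v (p.coeff i) * r ^ i) h
  · rw [Polynomial.notMem_support_iff.mp h, v.map_zero, zero_mul]
    exact zero_le'

lemma gaussVal_ne_zero {p : F[X]} (hp : p ≠ 0) (hr : r ≠ 0) : gaussVal v r p ≠ 0 := by
  obtain ⟨n, hn⟩ := Polynomial.support_nonempty.mpr hp
  have h1 : v (p.coeff n) * r ^ n ≠ 0 :=
    mul_ne_zero (v.ne_zero_iff.mpr (Polynomial.mem_support_iff.mp hn)) (pow_ne_zero _ hr)
  exact fun h => h1 (le_antisymm (h ▸ le_gaussVal v r p n) zero_le')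

lemma gaussVal_term_le (p q : F[X]) {a b : ℕ} :
    v (p.coeff a * q.coeff b) * r ^ (a + b) ≤ gaussVal v r p * gaussVal v r q := by
  rw [v.map_mul, pow_add, mul_mul_mul_comm]
  exact mul_le_mul' (le_gaussVal v r p a) (le_gaussVal v r q b)

lemma gaussVal_mul_le (p q : F[X]) :
    gaussVal v r (p * q) ≤ gaussVal v r p * gaussVal v r q := by
  refine Finset.sup_le fun n _ => ?_
  rw [Polynomial.coeff_mul]
  by_cases hrn : r ^ n = 0
  · rw [hrn, mul_zero]; exact zero_le'
  · have hrn' : (0 : Γ₀) < r ^ n := lt_of_le_of_ne zero_le' (Ne.symm hrn)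
    rw [← le_div_iff₀ hrn']
    refine v.map_sum_le fun x hx => ?_
    rw [le_div_iff₀ hrn']
    obtain hab := Finset.HasAntidiagonal.mem_antidiagonal.mp hx
    rw [← hab]
    exact gaussVal_term_le v r p q

lemma gaussVal_mul (p q : F[X]) :
    gaussVal v r (p * q) = gaussVal v r p * gaussVal v r q := by
  have hbot : (⊥ : Γ₀) = 0 := rfl
  by_cases hp : p = 0
  · simp [hp, gaussVal, hbot]
  by_cases hq : q = 0
  · simp [hq, gaussVal, hbot]
  by_cases hr : r = 0
  · have key : ∀ s : F[X], gaussVal v 0 s = v (s.coeff 0) := by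
      intro s
      refine le_antisymm (Finset.sup_le fun i _ => ?_) ?_
      · rcases Nat.eq_zero_or_pos i with h | h
        · simp [h]
        · simp [zero_pow h.ne']
      · have := le_gaussVal v 0 s 0
        simpa using this
    subst hr
    rw [key, key, key, Polynomial.mul_coeff_zero, v.map_mul]
  · refine le_antisymm (gaussVal_mul_le v r p q) ?_
    have hwp := gaussVal_ne_zero v r hp hr
    have hwq := gaussVal_ne_zero v r hq hr
    have hexp : ∃ i, v (p.coeff i) * r ^ i = gaussVal v r p := by
      obtain ⟨i, _, hi⟩ := Finset.exists_mem_eq_sup p.support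
        (Polynomial.support_nonempty.mpr hp) (fun i => v (p.coeff i) * r ^ i)
      exact ⟨i, hi.symm⟩
    have hexq : ∃ j, v (q.coeff j) * r ^ j = gaussVal v r q := by
      obtain ⟨j, _, hj⟩ := Finset.exists_mem_eq_sup q.support
        (Polynomial.support_nonempty.mpr hq) (fun j => v (q.coeff j) * r ^ j)
      exact ⟨j, hj.symm⟩
    set i := Nat.find hexp with hidef
    set j := Nat.find hexq with hjdef
    have hi : v (p.coeff i) * r ^ i = gaussVal v r p := Nat.find_spec hexp
    have hj : v (q.coeff j) * r ^ j = gaussVal v r q := Nat.find_spec hexq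
    have hpi : ∀ k < i, v (p.coeff k) * r ^ k < gaussVal v r p := fun k hk =>
      lt_of_le_of_ne (le_gaussVal v r p k) (Nat.find_min hexp hk)
    have hqj : ∀ k < j, v (q.coeff k) * r ^ k < gaussVal v r q := fun k hk =>
      lt_of_le_of_ne (le_gaussVal v r q k) (Nat.find_min hexq hk)
    set n := i + j with hn
    have hrn : r ^ n ≠ 0 := pow_ne_zero _ hr
    have hij_mem : (i, j) ∈ Finset.HasAntidiagonal.antidiagonal n := Finset.HasAntidiagonal.mem_antidiagonal.mpr rfl
    have hvij : v (p.coeff i * q.coeff j) * r ^ n = gaussVal v r p * gaussVal v r q := by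
      rw [v.map_mul, hn, pow_add, mul_mul_mul_comm, hi, hj]
    have hvij0 : v (p.coeff i * q.coeff j) ≠ 0 := by
      intro h
      rw [h, zero_mul] at hvij
      exact mul_ne_zero hwp hwq hvij.symm
    have hcoeff : v ((p * q).coeff n) = v (p.coeff i * q.coeff j) := by
      rw [Polynomial.coeff_mul, ← Finset.sum_erase_add _ _ hij_mem]
      refine Valuation.map_add_eq_of_lt_right _ (v.map_sum_lt hvij0 fun x hx => ?_)
      obtain ⟨hne, hx1⟩ := Finset.mem_erase.mp hx
      have hab : x.1 + x.2 = n := Finset.HasAntidiagonal.mem_antidiagonal.mp hx1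
      have hab' : x.1 + x.2 = i + j := hn ▸ hab
      have hstrict : v (p.coeff x.1 * q.coeff x.2) * r ^ n
          < v (p.coeff i * q.coeff j) * r ^ n := by
        rw [hvij, v.map_mul, ← hab, pow_add, mul_mul_mul_comm]
        rcases lt_or_ge x.1 i with h | h
        · exact aux_mul_lt_mul (hpi _ h) (le_gaussVal v r q x.2) hwq
        · have hx2j : x.2 < j := by
            rcases lt_or_eq_of_le h with h' | h'
            · omega
            · have hx2 : x.2 = j := by omega
              exact absurd (Prod.ext h'.symm hx2) hne
          have := aux_mul_lt_mul (hqj _ hx2j) (le_gaussVal v r p x.1) hwp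
          rw [mul_comm (v (q.coeff x.2) * r ^ x.2), mul_comm (gaussVal v r q)] at this
          exact this
      exact lt_of_not_ge fun hle => hstrict.not_ge (mul_le_mul_left hle _)
    calc gaussVal v r p * gaussVal v r q = v ((p * q).coeff n) * r ^ n := by
          rw [hcoeff, hvij]
      _ ≤ gaussVal v r (p * q) := le_gaussVal v r _ n

end Aux

theorem gaussVal_isValuation {F Γ₀ : Type*} [Field F] [LinearOrderedCommGroupWithZero Γ₀]
    (v : Valuation F Γ₀) (r : Γ₀) :
    gaussVal v r 0 = 0 ∧ gaussVal v r 1 = 1 ∧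
    (∀ p q : F[X], gaussVal v r (p * q) = gaussVal v r p * gaussVal v r q) ∧
    (∀ p q : F[X], gaussVal v r (p + q) ≤ max (gaussVal v r p) (gaussVal v r q)) := by
  refine ⟨by simp [gaussVal]; rfl, ?_, gaussVal_mul v r, ?_⟩
  · have h1 : (1 : F[X]).support = {0} := by
      rw [show (1 : F[X]) = C 1 from rfl, Polynomial.support_C one_ne_zero]
    simp [gaussVal, h1]
  · intro p q
    refine Finset.sup_le fun n _ => ?_
    rw [Polynomial.coeff_add]
    calc v (p.coeff n + q.coeff n) * r ^ n
        ≤ max (v (p.coeff n)) (v (q.coeff n)) * r ^ n :=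
          mul_le_mul_left (v.map_add _ _) _
      _ = max (v (p.coeff n) * r ^ n) (v (q.coeff n) * r ^ n) :=
          (max_mul_mul_right _ _ _).symm
      _ ≤ max (gaussVal v r p) (gaussVal v r q) :=
          max_le_max (le_gaussVal v r p n) (le_gaussVal v r q n)
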